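/- Let X be a real topological vector space whose continuous dual X* separates points. Let f : [0,∞) → X be non-zero with x*∘f right continuous at some point for every x* ∈ X*, and g : [0,∞) → [0,∞) satisfy f(s + g(s)·t) = f(s) + f(t) for all s,t ≥ 0. Then either g ≡ 1 and f(s) = s·a for some a ∈ X\{0}, or there exist α > 0 and a ∈ X\{0} such that g(s) = αs+1 and f(s) = log(αs+1)·a for all s ≥ 0. -/

import Mathlib

lemma lin_aux (H : ℝ → ℝ) (hadd : ∀ u v : ℝ, 0 ≤ u → 0 ≤ v → H (u + v) = H u + H v)
    (u₀ : ℝ) (hu₀ : 0 ≤ u₀) (hc : ContinuousWithinAt H (Set.Ici u₀) u₀) :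
    ∀ u : ℝ, 0 ≤ u → H u = u * H 1 := by
  have hH0 : H 0 = 0 := by have := hadd 0 0 le_rfl le_rfl; simp at this; linarith
  have hnat : ∀ (n : ℕ) (u : ℝ), 0 ≤ u → H (n * u) = n * H u := by
    intro n
    induction n with
    | zero => intro u hu; simp [hH0]
    | succ n ih =>
      intro u hu
      have h1 : ((n + 1 : ℕ) : ℝ) * u = (n : ℝ) * u + u := by push_cast; ring
      rw [h1, hadd _ _ (by positivity) hu, ih u hu]; push_cast; ring
  have hrat : ∀ q : ℚ, 0 ≤ q → H (q : ℝ) = (q : ℝ) * H 1 := by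
    intro q hq
    have hd : (q.den : ℝ) ≠ 0 := by exact_mod_cast q.den_nz
    have hqr : (0:ℝ) ≤ (q:ℝ) := by exact_mod_cast hq
    have h1 : H ((q.den : ℝ) * (q:ℝ)) = (q.den : ℝ) * H q := hnat q.den q hqr
    have h2 : (q.den : ℝ) * (q : ℝ) = ((q.num.toNat : ℕ) : ℝ) := by
      have hn : (q.num.toNat : ℤ) = q.num := Int.toNat_of_nonneg (Rat.num_nonneg.mpr hq)
      have : (q.den : ℝ) * (q : ℝ) = (q.num : ℝ) := by
        rw [Rat.cast_def]; field_simp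
      rw [this]; exact_mod_cast hn.symm
    have h3 : H (((q.num.toNat : ℕ) : ℝ) * 1) = ((q.num.toNat : ℕ) : ℝ) * H 1 :=
      hnat _ 1 zero_le_one
    simp only [mul_one] at h3
    have : (q.den : ℝ) * H q = (q.den : ℝ) * ((q : ℝ) * H 1) := by
      rw [← h1, h2, h3, ← h2]; ring
    exact mul_left_cancel₀ hd this
  have hsmall : ∀ ε : ℝ, 0 < ε → ∃ δ : ℝ, 0 < δ ∧ ∀ t : ℝ, 0 ≤ t → t < δ → |H t| < ε := by
    intro ε hε
    rw [Metric.continuousWithinAt_iff] at hc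
    obtain ⟨δ, hδ, hd⟩ := hc ε hε
    refine ⟨δ, hδ, fun t ht htδ => ?_⟩
    have h1 : u₀ + t ∈ Set.Ici u₀ := by simp; linarith
    have h2 : dist (u₀ + t) u₀ < δ := by
      rw [Real.dist_eq]; rw [abs_of_nonneg (by linarith : (0:ℝ) ≤ u₀ + t - u₀)]; linarith
    have := hd h1 h2
    rw [hadd u₀ t hu₀ ht, Real.dist_eq] at this
    simpa using this
  intro u hu
  have key : ∀ ε : ℝ, 0 < ε → |H u - u * H 1| < ε := by
    intro ε hε
    obtain ⟨δ, hδ, hd⟩ := hsmall (ε/2) (by linarith)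
    set A := |H 1| with hA
    have hA0 : 0 ≤ A := abs_nonneg _
    set δ' := min δ (ε/(2*(A+1))) with hδ'
    have hδ'0 : 0 < δ' := lt_min hδ (by positivity)
    obtain ⟨q, hq1, hq2⟩ := exists_rat_btwn (lt_add_of_pos_right u hδ'0)
    have hq0 : (0:ℝ) ≤ (q:ℝ) := le_of_lt (lt_of_le_of_lt hu hq1)
    have hqu : (0:ℝ) ≤ (q:ℝ) - u := by linarith
    have hsplit : H ((q:ℝ)) = H u + H ((q:ℝ) - u) := by
      have := hadd u ((q:ℝ) - u) hu hqu
      rwa [add_sub_cancel] at this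
    have h5 : |H ((q:ℝ) - u)| < ε/2 :=
      hd _ hqu (lt_of_lt_of_le (by linarith : (q:ℝ) - u < δ') (min_le_left _ _))
    have h6 : H ((q:ℝ)) = (q:ℝ) * H 1 := hrat q (by exact_mod_cast hq0)
    have h7 : H u - u * H 1 = ((q:ℝ) - u) * H 1 - H ((q:ℝ) - u) := by
      rw [h6] at hsplit; linarith [hsplit]
    have h8 : |H u - u * H 1| ≤ |((q:ℝ) - u) * H 1| + |H ((q:ℝ) - u)| := by
      rw [h7, sub_eq_add_neg]
      exact (abs_add_le _ _).trans (by rw [abs_neg])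
    have h9 : |((q:ℝ) - u) * H 1| ≤ δ' * A := by
      rw [abs_mul, abs_of_nonneg hqu]
      exact mul_le_mul_of_nonneg_right (by linarith) hA0
    have h10 : δ' * A ≤ ε/2 := by
      have hle : δ' ≤ ε/(2*(A+1)) := min_le_right _ _
      have h11 : δ' * A ≤ (ε/(2*(A+1))) * A := mul_le_mul_of_nonneg_right hle hA0
      have h12 : (ε/(2*(A+1))) * A ≤ ε/2 := by
        rw [div_mul_eq_mul_div, div_le_div_iff₀ (by positivity) (by norm_num)]
        nlinarith
      linarith
    linarith
  by_contra h
  exact absurd (key _ (abs_pos.mpr (sub_ne_zero.mpr h))) (lt_irrefl _)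

set_option maxHeartbeats 2000000 in
theorem stmt15 {X : Type*} [AddCommGroup X] [Module ℝ X]
    [TopologicalSpace X] [IsTopologicalAddGroup X] [ContinuousSMul ℝ X]
    (hsep : ∀ x : X, x ≠ 0 → ∃ φ : X →L[ℝ] ℝ, φ x ≠ 0)
    (f : ℝ → X) (g : ℝ → ℝ)
    (hgnn : ∀ s : ℝ, 0 ≤ s → 0 ≤ g s)
    (heq : ∀ s t : ℝ, 0 ≤ s → 0 ≤ t → f (s + g s * t) = f s + f t)
    (hfnz : ∃ s : ℝ, 0 ≤ s ∧ f s ≠ 0)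
    (hrc : ∀ φ : X →L[ℝ] ℝ, ∃ s : ℝ, 0 ≤ s ∧
      ContinuousWithinAt (fun t => φ (f t)) (Set.Ici s) s) :
    ((∀ s : ℝ, 0 ≤ s → g s = 1) ∧ ∃ a : X, a ≠ 0 ∧ ∀ s : ℝ, 0 ≤ s → f s = s • a) ∨
    (∃ α : ℝ, 0 < α ∧ ∃ a : X, a ≠ 0 ∧ ∀ s : ℝ, 0 ≤ s →
      g s = α * s + 1 ∧ f s = Real.log (α * s + 1) • a) := by
  obtain ⟨s₁, hs₁, hfs₁⟩ := hfnz
  -- basic facts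
  have hf0 : f 0 = 0 := by
    have := heq 0 0 le_rfl le_rfl
    simp only [mul_zero, add_zero] at this
    exact (left_eq_add.mp this)
  have gpos : ∀ s : ℝ, 0 ≤ s → 0 < g s := by
    intro s hs
    rcases lt_or_eq_of_le (hgnn s hs) with h | h
    · exact h
    · exfalso
      apply hfs₁
      have := heq s s₁ hs hs₁
      rw [← h, zero_mul, add_zero] at this
      exact (left_eq_add.mp this)
  have hker : (∀ φ : X →L[ℝ] ℝ, ∀ t : ℝ, 0 ≤ t → φ (f t) = 0) → False := by
    intro h
    obtain ⟨φ, hφ⟩ := hsep (f s₁) hfs₁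
    exact hφ (h φ s₁ hs₁)
  -- T1 : arbitrarily small global periods kill f
  have T1 : (∀ ε : ℝ, 0 < ε → ∃ p : ℝ, 0 < p ∧ p ≤ ε ∧ ∀ t : ℝ, 0 ≤ t → f (t + p) = f t)
      → False := by
    intro hsmall
    apply hker
    intro φ
    obtain ⟨s₀, hs₀, hcw⟩ := hrc φ
    have hconst : ∀ w : ℝ, s₀ ≤ w → φ (f w) = φ (f s₀) := by
      intro w hw
      by_contra hne
      have hε : 0 < |φ (f w) - φ (f s₀)| := abs_pos.mpr (sub_ne_zero.mpr hne)
      rw [Metric.continuousWithinAt_iff] at hcw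
      obtain ⟨δ, hδ, hd⟩ := hcw _ hε
      obtain ⟨p, hp0, hpδ, hper⟩ := hsmall δ hδ
      have hiter : ∀ k : ℕ, ∀ t : ℝ, 0 ≤ t → f (t + k * p) = f t := by
        intro k
        induction k with
        | zero => intro t ht; simp
        | succ k ih =>
          intro t ht
          have h1 : t + ((k+1 : ℕ) : ℝ) * p = (t + p) + (k : ℝ) * p := by push_cast; ring
          rw [h1, ih (t + p) (by linarith), hper t ht]
      set k := Nat.floor ((w - s₀)/p) with hk
      set t' := w - k * p with ht'
      have hwnn : 0 ≤ (w - s₀)/p := div_nonneg (by linarith) hp0.le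
      have h2 : (k : ℝ) ≤ (w - s₀)/p := Nat.floor_le hwnn
      have h3 : (w - s₀)/p < k + 1 := Nat.lt_floor_add_one _
      have h4 : (k : ℝ) * p ≤ w - s₀ := by
        rw [← le_div_iff₀ hp0]; exact h2
      have h5 : w - s₀ < (k + 1) * p := by
        rw [← div_lt_iff₀ hp0]; exact h3
      have ht'0 : s₀ ≤ t' := by simp only [ht']; linarith
      have ht'δ : t' - s₀ < δ := by simp only [ht']; nlinarith
      have hft' : f w = f t' := by
        have h6 := hiter k t' (by linarith)
        rw [ht'] at h6
        have h7 : w - ↑k * p + ↑k * p = w := by ring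
        rw [h7] at h6
        rw [ht']
        exact h6
      have := hd (Set.mem_Ici.mpr ht'0)
        (by rw [Real.dist_eq, abs_of_nonneg (by linarith)]; exact ht'δ)
      rw [← hft', Real.dist_eq] at this
      exact absurd this (lt_irrefl _)
    intro t ht
    have h1 : s₀ ≤ s₀ + g s₀ * t := by nlinarith [gpos s₀ hs₀]
    have h2 := heq s₀ t hs₀ ht
    have h3 : φ (f (s₀ + g s₀ * t)) = φ (f s₀) + φ (f t) := by rw [h2, map_add]
    rw [hconst _ h1] at h3
    linarith
  -- KillJ : a contraction invariance kills f
  have KillJ : ∀ A r : ℝ, 0 ≤ A → 0 < r → r < 1 →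
      (∀ w : ℝ, A ≤ w → f (A + r * (w - A)) = f w) → False := by
    intro A r hA hr0 hr1 hJ
    have Jiter : ∀ n : ℕ, ∀ w : ℝ, A ≤ w → f (A + r^n * (w - A)) = f w := by
      intro n
      induction n with
      | zero => intro w hw; simp
      | succ n ih =>
        intro w hw
        have hw' : A ≤ A + r^n * (w - A) := by nlinarith [pow_pos hr0 n]
        have h1 := hJ _ hw'
        have h2 : A + r * (A + r^n * (w - A) - A) = A + r^(n+1) * (w - A) := by ring
        rw [h2] at h1
        rw [h1]
        exact ih w hw
    have prop : ∀ s : ℝ, 0 ≤ s → ∀ w : ℝ, s + g s * A ≤ w →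
        f ((s + g s * A) + r * (w - (s + g s * A))) = f w := by
      intro s hs w hw
      have hgs := gpos s hs
      set x := (w - s)/g s with hx
      have hxA : A ≤ x := by
        rw [hx, le_div_iff₀ hgs]; nlinarith
      have hx0 : 0 ≤ x := le_trans hA hxA
      have hw1 : s + g s * x = w := by rw [hx]; field_simp; ring
      have h1 : f w = f s + f x := by rw [← hw1]; exact heq s x hs hx0
      have h2 : f x = f (A + r * (x - A)) := (hJ x hxA).symm
      have h3 : 0 ≤ A + r * (x - A) := by nlinarith
      have h4 : f (s + g s * (A + r * (x - A))) = f s + f (A + r * (x - A)) :=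
        heq s _ hs h3
      have h5 : s + g s * (A + r * (x - A)) = (s + g s * A) + r * (w - (s + g s * A)) := by
        have : g s * x = w - s := by rw [hx]; field_simp
        nlinarith [this]
      rw [← h5, h4, ← h2, ← h1]
    -- a second invariance point B > A
    set B := (A + 1) + g (A + 1) * A with hB
    have hApos : (0:ℝ) ≤ A + 1 := by linarith
    have hBA : A < B := by nlinarith [gpos (A+1) hApos, hA]
    have JB : ∀ w : ℝ, B ≤ w → f (B + r * (w - B)) = f w := prop (A+1) hApos
    -- localized period p on [A'', ∞)
    set p := (1 - r) * (B - A) with hp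
    have hppos : 0 < p := by nlinarith
    set A'' := A + r * (B - A) with hA''
    have hA''A : A ≤ A'' := by nlinarith
    have hA''0 : 0 ≤ A'' := le_trans hA hA''A
    have hper1 : ∀ v : ℝ, A'' ≤ v → f (v + p) = f v := by
      intro v hv
      set w := A + (v - A)/r with hw
      have hwB : B ≤ w := by
        have h0 : B - A ≤ (v - A)/r := by
          rw [le_div_iff₀ hr0]; nlinarith
        rw [hw]; linarith
      have hwA : A ≤ w := le_trans (le_of_lt hBA) hwB
      have h1 : A + r * (w - A) = v := by rw [hw]; field_simp; ring
      have h2 : f v = f w := by rw [← h1]; exact hJ w hwA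
      have h3 : B + r * (w - B) = v + p := by rw [← h1, hp]; ring
      have h4 : f (v + p) = f w := by rw [← h3]; exact JB w hwB
      rw [h4, h2]
    -- global period q
    set q := p / g A'' with hq
    have hgA'' := gpos A'' hA''0
    have hqpos : 0 < q := div_pos hppos hgA''
    have hgq : ∀ t : ℝ, 0 ≤ t → f (t + q) = f t := by
      intro t ht
      have h1 := heq A'' (t + q) hA''0 (by linarith)
      have h2 := heq A'' t hA''0 ht
      have h3 : A'' + g A'' * (t + q) = (A'' + g A'' * t) + p := by
        have : g A'' * q = p := by rw [hq]; field_simp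
        nlinarith [this]
      have h4 : A'' ≤ A'' + g A'' * t := by nlinarith
      rw [h3, hper1 _ h4, h2] at h1
      exact (add_left_cancel h1).symm
    -- periods r^n * q at points ≥ A, hence small global periods
    have hvrq : ∀ n : ℕ, ∀ v : ℝ, A ≤ v → f (v + r^n * q) = f v := by
      intro n v hv
      have hrn : 0 < r^n := pow_pos hr0 n
      set w := A + (v - A)/r^n with hw
      have hwA : A ≤ w := by
        rw [hw]; have : 0 ≤ (v - A)/r^n := div_nonneg (by linarith) hrn.le
        linarith
      have h1 : A + r^n * (w - A) = v := by rw [hw]; field_simp; ring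
      have h2 : A + r^n * ((w + q) - A) = v + r^n * q := by rw [← h1]; ring
      have h3 : f (v + r^n * q) = f (w + q) := by rw [← h2]; exact Jiter n (w + q) (by linarith)
      rw [h3, hgq w (le_trans hA hwA), ← h1, Jiter n w hwA]
    have hsmalln : ∀ n : ℕ, ∀ t : ℝ, 0 ≤ t → f (t + r^n * q / g A) = f t := by
      intro n t ht
      have hgA := gpos A hA
      have h1 := heq A (t + r^n * q / g A) hA (by positivity)
      have h2 := heq A t hA ht
      have h3 : A + g A * (t + r^n * q / g A) = (A + g A * t) + r^n * q := by field_simp; ring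
      have h4 : A ≤ A + g A * t := by nlinarith
      rw [h3, hvrq n _ h4, h2] at h1
      exact (add_left_cancel h1).symm
    apply T1
    intro ε hε
    have hgA := gpos A hA
    obtain ⟨n, hn⟩ := exists_pow_lt_of_lt_one (show (0:ℝ) < ε * g A / q by positivity) hr1
    refine ⟨r^n * q / g A, by positivity, ?_, hsmalln n⟩
    rw [div_le_iff₀ hgA]
    calc r^n * q ≤ (ε * g A / q) * q := mul_le_mul_of_nonneg_right (le_of_lt hn) hqpos.le
    _ = ε * g A := div_mul_cancel₀ _ (ne_of_gt hqpos)
  -- two multipliers at one point kill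
  have twoMul : ∀ P γ₁ γ₂ : ℝ, 0 ≤ P → 0 < γ₁ → 0 < γ₂ → γ₂ < γ₁ →
      (∀ u : ℝ, 0 ≤ u → f (P + γ₁ * u) = f (P + γ₂ * u)) → False := by
    intro P γ₁ γ₂ hP h1 h2 h12 hkey
    refine KillJ P (γ₂/γ₁) hP (by positivity) (by rw [div_lt_one h1]; exact h12) ?_
    intro w hw
    set u := (w - P)/γ₁ with hu
    have hu0 : 0 ≤ u := div_nonneg (by linarith) h1.le
    have e1 : P + γ₁ * u = w := by rw [hu]; field_simp; ring
    have e2 : P + γ₂ * u = P + γ₂/γ₁ * (w - P) := by rw [hu]; ring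
    rw [← e1, hkey u hu0, e2, e1]
  -- g 0 = 1
  have g0 : g 0 = 1 := by
    have hkey : ∀ t : ℝ, 0 ≤ t → f (g 0 * t) = f t := by
      intro t ht
      have := heq 0 t le_rfl ht
      rw [hf0, zero_add, zero_add] at this
      exact this
    have hg0 := gpos 0 le_rfl
    rcases lt_trichotomy (g 0) 1 with h | h | h
    · exfalso
      refine KillJ 0 (g 0) le_rfl hg0 h ?_
      intro w hw
      have := hkey w hw
      simpa using this
    · exact h
    · exfalso
      refine KillJ 0 (g 0)⁻¹ le_rfl (by positivity) (by rw [inv_lt_one_iff₀]; right; exact h) ?_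
      intro w hw
      have h1 := hkey ((g 0)⁻¹ * w) (by positivity)
      have h2 : g 0 * ((g 0)⁻¹ * w) = w := by field_simp
      rw [h2] at h1
      simpa using h1.symm
  -- Goła̧b–Schinzel for g
  have GS : ∀ s t : ℝ, 0 ≤ s → 0 ≤ t → g (s + g s * t) = g s * g t := by
    intro s t hs ht
    set P := s + g s * t with hP
    have hP0 : 0 ≤ P := by nlinarith [gpos s hs]
    have hgP := gpos P hP0
    have hgg : 0 < g s * g t := mul_pos (gpos s hs) (gpos t ht)
    have hkey : ∀ u : ℝ, 0 ≤ u → f (P + g P * u) = f (P + (g s * g t) * u) := by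
      intro u hu
      have e1 : f (P + g P * u) = f P + f u := heq P u hP0 hu
      have e2 : P + (g s * g t) * u = s + g s * (t + g t * u) := by rw [hP]; ring
      have e3 : f (P + (g s * g t) * u) = f P + f u := by
        rw [e2, heq s _ hs (by nlinarith [gpos t ht]), heq t u ht hu, hP, heq s t hs ht,
          add_assoc]
      rw [e1, e3]
    rcases lt_trichotomy (g P) (g s * g t) with h | h | h
    · exact absurd (twoMul P (g s * g t) (g P) hP0 hgg hgP h
        (fun u hu => (hkey u hu).symm)) id
    · exact h
    · exact absurd (twoMul P (g P) (g s * g t) hP0 hgP hgg h hkey) id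
  -- a global period kills f
  have PK : ∀ q : ℝ, 0 < q → (∀ t : ℝ, 0 ≤ t → f (t + q) = f t) → False := by
    intro q hq hper
    have fkq : ∀ k : ℕ, f (k * q) = 0 := by
      intro k
      induction k with
      | zero => simpa using hf0
      | succ k ih =>
        have h1 : ((k+1 : ℕ) : ℝ) * q = (k : ℝ) * q + q := by push_cast; ring
        rw [h1, hper _ (by positivity), ih]
    by_cases h1 : ∃ b : ℝ, 0 < b ∧ f b = 0 ∧ g b < 1
    · obtain ⟨b, hb, hfb, hgb⟩ := h1
      have hgbp := gpos b hb.le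
      have hkey : ∀ u : ℝ, 0 ≤ u → f (b + g b * u) = f u := by
        intro u hu
        rw [heq b u hb.le hu, hfb, zero_add]
      set A := b / (1 - g b) with hA
      have hA0 : 0 ≤ A := div_nonneg hb.le (by linarith)
      refine KillJ A (g b) hA0 hgbp hgb ?_
      intro w hw
      have hne : (1:ℝ) - g b ≠ 0 := by linarith
      have e1 : A + g b * (w - A) = b + g b * w := by
        rw [hA]; field_simp; ring
      rw [e1]
      exact hkey w (le_trans hA0 hw)
    · by_cases h2 : ∃ u : ℝ, 0 ≤ u ∧ 1 < g u
      · obtain ⟨u, hu, hgu⟩ := h2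
        have hgup := gpos u hu
        have hstep : ∀ n : ℕ, ∀ t : ℝ, 0 ≤ t → f (t + q / (g u)^n) = f t := by
          intro n
          induction n with
          | zero => intro t ht; simpa using hper t ht
          | succ n ih =>
            intro t ht
            have hpn : 0 < q / (g u)^n := by positivity
            have e1 := heq u (t + q / (g u)^(n+1)) hu (by positivity)
            have e2 := heq u t hu ht
            have e3 : u + g u * (t + q / (g u)^(n+1)) = (u + g u * t) + q / (g u)^n := by
              field_simp
              ring
            rw [e3, ih _ (by nlinarith), e2] at e1
            exact (add_left_cancel e1).symm
        apply T1
        intro ε hε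
        obtain ⟨n, hn⟩ := pow_unbounded_of_one_lt (q / ε) hgu
        have hgn : 0 < (g u)^n := by positivity
        refine ⟨q / (g u)^n, by positivity, ?_, hstep n⟩
        rw [div_le_iff₀ hgn]
        rw [div_lt_iff₀ hε] at hn
        nlinarith
      · push_neg at h1 h2
        have gone : ∀ w : ℝ, 0 ≤ w → g w = 1 := by
          intro w hw
          have hgw := gpos w hw
          obtain ⟨k, hk⟩ := exists_nat_gt (w / q)
          have hkq : w ≤ (k:ℝ) * q := by
            rw [div_lt_iff₀ hq] at hk; linarith
          have hwq : 0 ≤ w / q := div_nonneg hw hq.le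
          have hkpos : (0:ℝ) < (k:ℝ) * q := by
            have hk0 : (0:ℝ) < (k:ℝ) := lt_of_le_of_lt hwq hk
            positivity
          have hgkq : g ((k:ℝ) * q) = 1 :=
            le_antisymm (h2 _ (le_of_lt hkpos)) (h1 _ hkpos (fkq k))
          set t' := ((k:ℝ) * q - w) / g w with ht'
          have ht'0 : 0 ≤ t' := div_nonneg (by linarith) hgw.le
          have e1 : w + g w * t' = (k:ℝ) * q := by rw [ht']; field_simp; ring
          have e2 := GS w t' hw ht'0
          rw [e1, hgkq] at e2
          have h3 : g t' ≤ 1 := h2 t' ht'0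
          have h4 : g w ≤ 1 := h2 w hw
          nlinarith [gpos t' ht'0]
        have fadd : ∀ u v : ℝ, 0 ≤ u → 0 ≤ v → f (u + v) = f u + f v := by
          intro u v hu hv
          have := heq u v hu hv
          rwa [gone u hu, one_mul] at this
        apply hker
        intro φ t ht
        obtain ⟨s₀, hs₀, hcw⟩ := hrc φ
        have hHadd : ∀ u v : ℝ, 0 ≤ u → 0 ≤ v →
            (fun u => φ (f u)) (u + v) = (fun u => φ (f u)) u + (fun u => φ (f u)) v := by
          intro u v hu hv; simp only; rw [fadd u v hu hv, map_add]
        have hlin := lin_aux (fun u => φ (f u)) hHadd s₀ hs₀ hcw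
        have hfq : f q = 0 := by have := fkq 1; simpa using this
        have hq1 : q * φ (f 1) = 0 := by
          have := hlin q hq.le
          rw [hfq, map_zero] at this
          exact this.symm
        have hH1 : φ (f 1) = 0 := by
          rcases mul_eq_zero.mp hq1 with h | h
          · exact absurd h (ne_of_gt hq)
          · exact h
        have := hlin t ht
        rw [this, hH1, mul_zero]
  -- the disguised Cauchy reduction when g is affine
  have cauchy : ∀ lam : ℝ, 0 < lam → (∀ s : ℝ, 0 ≤ s → g s = 1 + lam * s) →
      ∀ φ : X →L[ℝ] ℝ, ∃ c : ℝ, ∀ s : ℝ, 0 ≤ s → φ (f s) = c * Real.log (1 + lam * s) := by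
    intro lam hlam hgaff φ
    obtain ⟨s₀, hs₀, hcw⟩ := hrc φ
    set E : ℝ → ℝ := fun u => (Real.exp (lam * u) - 1) / lam with hE
    have hE0 : ∀ u : ℝ, 0 ≤ u → 0 ≤ E u := by
      intro u hu
      have h1 : 1 ≤ Real.exp (lam * u) := Real.one_le_exp (by positivity)
      simp only [hE]
      exact div_nonneg (by linarith) hlam.le
    have hEadd : ∀ u v : ℝ, E (u + v) = E u + (1 + lam * E u) * E v := by
      intro u v
      simp only [hE]
      rw [mul_add, Real.exp_add]
      field_simp
      ring
    have hHadd : ∀ u v : ℝ, 0 ≤ u → 0 ≤ v → (fun u => φ (f (E u))) (u + v) =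
        (fun u => φ (f (E u))) u + (fun u => φ (f (E u))) v := by
      intro u v hu hv
      simp only
      rw [hEadd u v, ← hgaff (E u) (hE0 u hu), heq (E u) (E v) (hE0 u hu) (hE0 v hv), map_add]
    have hEinv : ∀ s : ℝ, 0 ≤ s → E (Real.log (1 + lam * s) / lam) = s := by
      intro s hs
      have h1s : (0:ℝ) < 1 + lam * s := by nlinarith
      simp only [hE]
      have h2 : lam * (Real.log (1 + lam * s) / lam) = Real.log (1 + lam * s) := by
        field_simp
      rw [h2, Real.exp_log h1s]
      field_simp; ring
    set u₀ := Real.log (1 + lam * s₀) / lam with hu₀def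
    have hu₀ : 0 ≤ u₀ := div_nonneg (Real.log_nonneg (by nlinarith)) hlam.le
    have hEu₀ : E u₀ = s₀ := hEinv s₀ hs₀
    have hmono : ∀ u : ℝ, u₀ ≤ u → s₀ ≤ E u := by
      intro u hu
      rw [← hEu₀]
      simp only [hE]
      have h2 : Real.exp (lam * u₀) ≤ Real.exp (lam * u) :=
        Real.exp_le_exp.mpr (by nlinarith)
      gcongr
    have hcwH : ContinuousWithinAt (fun u => φ (f (E u))) (Set.Ici u₀) u₀ := by
      have hEc : Continuous E := by
        simp only [hE]; continuity
      have hcw' : ContinuousWithinAt (fun t => φ (f t)) (Set.Ici s₀) (E u₀) := by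
        rw [hEu₀]; exact hcw
      have hmt : Set.MapsTo E (Set.Ici u₀) (Set.Ici s₀) := fun u hu => hmono u hu
      have hcomp := ContinuousWithinAt.comp hcw' hEc.continuousWithinAt hmt
      exact hcomp
    have hlin := lin_aux _ hHadd u₀ hu₀ hcwH
    refine ⟨φ (f (E 1)) / lam, ?_⟩
    intro s hs
    set u := Real.log (1 + lam * s) / lam with hudef
    have hu0 : 0 ≤ u := div_nonneg (Real.log_nonneg (by nlinarith)) hlam.le
    have hEu : E u = s := hEinv s hs
    have h3 := hlin u hu0
    simp only [hEu] at h3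
    rw [h3, hudef]
    ring
  -- injectivity of f on [0, ∞)
  have nodup : ∀ a b : ℝ, 0 ≤ a → a < b → f a = f b → False := by
    intro a b ha hab hfab
    have hb : 0 ≤ b := le_trans ha hab.le
    have hga := gpos a ha
    have hgb := gpos b hb
    have hgane : g a ≠ 0 := ne_of_gt hga
    rcases lt_trichotomy (g a) (g b) with hcase | hcase | hcase
    · -- Case: g a < g b
      set R := g b / g a with hR
      have hR1 : 1 < R := by rw [hR, lt_div_iff₀ hga]; linarith
      have hR0 : 0 < R := lt_trans one_pos hR1
      have inv0 : ∀ x : ℝ, a ≤ x → f x = f (b + R * (x - a)) := by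
        intro x hx
        set u := (x - a) / g a with hu
        have hu0 : 0 ≤ u := div_nonneg (by linarith) hga.le
        have e1 : a + g a * u = x := by rw [hu]; field_simp; ring
        have e2 : g b * u = R * (x - a) := by rw [hu, hR]; ring
        have h3 : f x = f a + f u := by rw [← e1]; exact heq a u ha hu0
        have h4 : f (b + g b * u) = f b + f u := heq b u hb hu0
        rw [e2] at h4
        rw [h3, hfab, ← h4]
      have invs : ∀ s : ℝ, 0 ≤ s → ∀ w : ℝ, s + g s * a ≤ w →
          f w = f (R * w + (s * (1 - R) + g s * (b - R * a))) := by
        intro s hs w hw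
        have hgs := gpos s hs
        set x := (w - s) / g s with hx
        have hxa : a ≤ x := by rw [hx, le_div_iff₀ hgs]; nlinarith
        have hx0 : 0 ≤ x := le_trans ha hxa
        have e1 : s + g s * x = w := by rw [hx]; field_simp; ring
        have h3 : f w = f s + f x := by rw [← e1]; exact heq s x hs hx0
        have h4 : 0 ≤ b + R * (x - a) := by nlinarith
        have h5 : f (s + g s * (b + R * (x - a))) = f s + f (b + R * (x - a)) :=
          heq s _ hs h4
        have e6 : g s * x = w - s := by rw [hx]; field_simp
        have e2 : s + g s * (b + R * (x - a)) = R * w + (s * (1 - R) + g s * (b - R * a)) := by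
          linear_combination R * e6
        rw [h3, inv0 x hxa, ← h5, e2]
      by_cases hcs : ∀ s : ℝ, 0 ≤ s → s * (1 - R) + g s * (b - R * a) = b - R * a
      · -- g is affine : g s = 1 + lam * s
        have hβ : b - R * a ≠ 0 := by
          intro h0
          have h1 := hcs 1 zero_le_one
          rw [h0] at h1
          simp only [mul_zero, mul_one, one_mul, add_zero] at h1
          linarith
        set lam := (R - 1) / (b - R * a) with hlam
        have hgaff : ∀ s : ℝ, 0 ≤ s → g s = 1 + lam * s := by
          intro s hs
          have h1 := hcs s hs
          have h2 : g s * (b - R * a) = (b - R * a) + s * (R - 1) := by linarith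
          rw [hlam]
          field_simp
          linear_combination h2
        have hlampos : 0 < lam := by
          rcases lt_trichotomy lam 0 with h | h | h
          · exfalso
            have hinv : lam⁻¹ < 0 := inv_lt_zero.mpr h
            have hs' : (0:ℝ) ≤ -lam⁻¹ := by linarith
            have hgp := gpos _ hs'
            rw [hgaff _ hs'] at hgp
            have hlamne : lam ≠ 0 := ne_of_lt h
            have he : lam * -lam⁻¹ = -1 := by rw [mul_neg, mul_inv_cancel₀ hlamne]
            rw [he] at hgp
            norm_num at hgp
          · exfalso
            rw [hlam, div_eq_zero_iff] at h
            rcases h with h | h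
            · linarith
            · exact hβ h
          · exact h
        apply hker
        intro φ t ht
        obtain ⟨c, hc⟩ := cauchy lam hlampos hgaff φ
        have h1 := hc a ha
        have h2 := hc b hb
        rw [hfab] at h1
        have hlt : Real.log (1 + lam * a) < Real.log (1 + lam * b) :=
          Real.log_lt_log (by nlinarith) (by nlinarith)
        have hc0 : c = 0 := by
          by_contra hcne
          have h3 : c * Real.log (1 + lam * a) = c * Real.log (1 + lam * b) := by
            rw [← h1, ← h2]
          exact absurd (mul_left_cancel₀ hcne h3) (ne_of_lt hlt)
        rw [hc t ht, hc0, zero_mul]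
      · -- non-affine : build a global period and kill
        push_neg at hcs
        obtain ⟨s₂, hs₂, hcne⟩ := hcs
        set c0 := 0 * (1 - R) + g 0 * (b - R * a) with hc0def
        set c2 := s₂ * (1 - R) + g s₂ * (b - R * a) with hc2def
        have hc0val : c0 = b - R * a := by rw [hc0def, g0]; ring
        have hne : c2 ≠ c0 := by rw [hc0val]; exact hcne
        have hinv0' : ∀ w : ℝ, g 0 * a ≤ w → f w = f (R * w + c0) := by
          intro w hw
          have h1 := invs 0 le_rfl w (by simpa using hw)
          rw [← hc0def] at h1
          exact h1
        have hinv2' : ∀ w : ℝ, s₂ + g s₂ * a ≤ w → f w = f (R * w + c2) := by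
          intro w hw
          have h1 := invs s₂ hs₂ w hw
          rw [← hc2def] at h1
          exact h1
        set e₁ := min c0 c2 with he₁def
        set e₂ := max c0 c2 with he₂def
        have hd : 0 < e₂ - e₁ := sub_pos.mpr (min_lt_max.mpr (Ne.symm hne))
        set M := max (g 0 * a) (s₂ + g s₂ * a) with hM
        have htail : ∀ v : ℝ, R * M + e₁ ≤ v → f (v + (e₂ - e₁)) = f v := by
          intro v hv
          set w := (v - e₁) / R with hw
          have hwM : M ≤ w := by rw [hw, le_div_iff₀ hR0]; nlinarith
          have hw0 : g 0 * a ≤ w := le_trans (le_max_left _ _) hwM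
          have hw2 : s₂ + g s₂ * a ≤ w := le_trans (le_max_right _ _) hwM
          have k0 : f w = f (R * w + c0) := hinv0' w hw0
          have k2 : f w = f (R * w + c2) := hinv2' w hw2
          have hv1 : R * w = v - e₁ := by rw [hw]; field_simp
          rcases le_total c0 c2 with hcc | hcc
          · have he1 : e₁ = c0 := min_eq_left hcc
            have he2 : e₂ = c2 := max_eq_right hcc
            have ev : v = R * w + c0 := by linarith
            have ev2 : v + (e₂ - e₁) = R * w + c2 := by linarith
            rw [ev2, ← k2, ev, ← k0]
          · have he1 : e₁ = c2 := min_eq_right hcc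
            have he2 : e₂ = c0 := max_eq_left hcc
            have ev : v = R * w + c2 := by linarith
            have ev2 : v + (e₂ - e₁) = R * w + c0 := by linarith
            rw [ev2, ← k0, ev, ← k2]
        set V := max (R * M + e₁) 0 with hV
        have hV0 : (0:ℝ) ≤ V := le_max_right _ _
        have htail' : ∀ v : ℝ, V ≤ v → f (v + (e₂ - e₁)) = f v := fun v hv =>
          htail v (le_trans (le_max_left _ _) hv)
        have hgV := gpos V hV0
        set q := (e₂ - e₁) / g V with hq
        have hqpos : 0 < q := div_pos hd hgV
        refine PK q hqpos ?_
        intro t ht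
        have h1 := heq V (t + q) hV0 (by linarith)
        have h2 := heq V t hV0 ht
        have h3 : V + g V * (t + q) = (V + g V * t) + (e₂ - e₁) := by
          have hgq : g V * q = e₂ - e₁ := by rw [hq]; field_simp
          linear_combination hgq
        have h4 : V ≤ V + g V * t := by nlinarith
        rw [h3, htail' _ h4, h2] at h1
        exact (add_left_cancel h1).symm
    · -- Case: g a = g b, gives a global period directly
      set q := (b - a) / g a with hq
      have hqpos : 0 < q := div_pos (by linarith) hga
      refine PK q hqpos ?_
      intro t ht
      have h1 := heq a (t + q) ha (by linarith)
      have h2 := heq b t hb ht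
      have h3 : a + g a * (t + q) = b + g b * t := by
        rw [← hcase]
        have hgq : g a * q = b - a := by rw [hq]; field_simp
        linear_combination hgq
      rw [h3, h2, ← hfab] at h1
      exact (add_left_cancel h1).symm
    · -- Case: g b < g a, contraction
      set r := g b / g a with hr
      have hr0 : 0 < r := div_pos hgb hga
      have hr1 : r < 1 := by rw [hr, div_lt_one hga]; exact hcase
      set u' := (b - a) / (g a - g b) with hu'
      have hu'0 : 0 < u' := div_pos (by linarith) (by linarith)
      set A := a + g a * u' with hA
      have hA0 : 0 ≤ A := by nlinarith
      refine KillJ A r hA0 hr0 hr1 ?_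
      intro w hw
      have hwa : a ≤ w := by nlinarith
      set u := (w - a) / g a with hu
      have hu0 : 0 ≤ u := div_nonneg (by linarith) hga.le
      have e1 : a + g a * u = w := by rw [hu]; field_simp; ring
      have h3 : f w = f a + f u := by rw [← e1]; exact heq a u ha hu0
      have h4 : f (b + g b * u) = f b + f u := heq b u hb hu0
      have e2 : b + g b * u = A + r * (w - A) := by
        have hne2 : g a - g b ≠ 0 := by linarith
        rw [hu, hA, hu', hr]
        field_simp
        ring
      rw [← e2, h4, ← hfab, ← h3]
  -- symmetry now gives that g is affine
  have hsym : ∀ s t : ℝ, 0 ≤ s → 0 ≤ t → s + g s * t = t + g t * s := by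
    intro s t hs ht
    have h1 : f (s + g s * t) = f (t + g t * s) := by
      rw [heq s t hs ht, heq t s ht hs, add_comm]
    have hn1 : 0 ≤ s + g s * t := by nlinarith [gpos s hs]
    have hn2 : 0 ≤ t + g t * s := by nlinarith [gpos t ht]
    rcases lt_trichotomy (s + g s * t) (t + g t * s) with h | h | h
    · exact absurd (nodup _ _ hn1 h h1) id
    · exact h
    · exact absurd (nodup _ _ hn2 h h1.symm) id
  set α := g 1 - 1 with hα
  have hgaff : ∀ s : ℝ, 0 ≤ s → g s = α * s + 1 := by
    intro s hs
    have h1 := hsym s 1 hs zero_le_one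
    rw [hα]
    linear_combination h1
  have hα0 : 0 ≤ α := by
    by_contra hneg
    push_neg at hneg
    have hs' : (0:ℝ) ≤ -α⁻¹ := by
      have : α⁻¹ < 0 := inv_lt_zero.mpr hneg
      linarith
    have hgp := gpos _ hs'
    rw [hgaff _ hs'] at hgp
    have hαne : α ≠ 0 := ne_of_lt hneg
    have he : α * -α⁻¹ = -1 := by rw [mul_neg, mul_inv_cancel₀ hαne]
    rw [he] at hgp
    norm_num at hgp
  have hs₁0 : 0 < s₁ := by
    rcases lt_or_eq_of_le hs₁ with h | h
    · exact h
    · exact absurd (by rw [← h, hf0] : f s₁ = 0) hfs₁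
  rcases lt_or_eq_of_le hα0 with hαpos | hαzero
  · -- α > 0 : logarithmic solution
    right
    have hgaff' : ∀ s : ℝ, 0 ≤ s → g s = 1 + α * s := by
      intro s hs; rw [hgaff s hs]; ring
    have hL1 : 0 < Real.log (1 + α * s₁) := Real.log_pos (by nlinarith)
    set aa := (Real.log (1 + α * s₁))⁻¹ • f s₁ with haa
    have hfs : ∀ s : ℝ, 0 ≤ s → f s = Real.log (1 + α * s) • aa := by
      intro s hs
      by_contra hne
      have hsub : f s - Real.log (1 + α * s) • aa ≠ 0 := sub_ne_zero.mpr hne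
      obtain ⟨φ, hφ⟩ := hsep _ hsub
      apply hφ
      obtain ⟨c, hc⟩ := cauchy α hαpos hgaff' φ
      rw [map_sub, map_smul, smul_eq_mul, haa, map_smul, smul_eq_mul]
      rw [hc s hs, hc s₁ hs₁]
      have hinv : (Real.log (1 + α * s₁))⁻¹ * (c * Real.log (1 + α * s₁)) = c := by
        field_simp
      rw [hinv]
      ring
    have hane : aa ≠ 0 := by
      intro h0
      apply hfs₁
      rw [hfs s₁ hs₁, h0, smul_zero]
    refine ⟨α, hαpos, aa, hane, ?_⟩
    intro s hs
    refine ⟨hgaff s hs, ?_⟩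
    rw [hfs s hs, add_comm 1 (α * s)]
  · -- α = 0 : linear solution
    left
    have hgone : ∀ s : ℝ, 0 ≤ s → g s = 1 := by
      intro s hs; rw [hgaff s hs, ← hαzero]; ring
    refine ⟨hgone, ?_⟩
    have fadd : ∀ u v : ℝ, 0 ≤ u → 0 ≤ v → f (u + v) = f u + f v := by
      intro u v hu hv
      have := heq u v hu hv
      rwa [hgone u hu, one_mul] at this
    have hlin : ∀ φ : X →L[ℝ] ℝ, ∀ s : ℝ, 0 ≤ s → φ (f s) = s * φ (f 1) := by
      intro φ
      obtain ⟨s₀, hs₀, hcw⟩ := hrc φ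
      have hHadd : ∀ u v : ℝ, 0 ≤ u → 0 ≤ v → (fun u => φ (f u)) (u + v) =
          (fun u => φ (f u)) u + (fun u => φ (f u)) v := by
        intro u v hu hv; simp only; rw [fadd u v hu hv, map_add]
      exact lin_aux _ hHadd s₀ hs₀ hcw
    have hs₁ne : s₁ ≠ 0 := ne_of_gt hs₁0
    set aa := s₁⁻¹ • f s₁ with haa
    have hane : aa ≠ 0 := smul_ne_zero (inv_ne_zero hs₁ne) hfs₁
    refine ⟨aa, hane, ?_⟩
    intro s hs
    by_contra hne
    have hsub : f s - s • aa ≠ 0 := sub_ne_zero.mpr hne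
    obtain ⟨φ, hφ⟩ := hsep _ hsub
    apply hφ
    rw [map_sub, map_smul, smul_eq_mul, haa, map_smul, smul_eq_mul]
    rw [hlin φ s hs, hlin φ s₁ hs₁]
    have hinv : s₁⁻¹ * (s₁ * φ (f 1)) = φ (f 1) := by field_simp
    rw [hinv]
    ring
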